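/- Countable Poisson splitting: let λ > 0, let N be a Poisson(λ) random variable, and let (U_j)_{j∈ℕ} be an i.i.d. sequence of ℕ-valued random variables with distribution p = (p_i)_{i∈ℕ} (a probability mass function on ℕ), independent of N. For each i ∈ ℕ define the category count Y_i := #{j < N : U_j = i}. Then the random variables (Y_i)_{i∈ℕ} are mutually independent and Y_i has the Poisson(p_i·λ) distribution for every i. -/

import Mathlib

open MeasureTheory ProbabilityTheory Finset
open scoped NNReal ENNReal

lemma PS_update_factorial (s : Finset ℕ) (k : ℕ → ℕ) {v : ℕ} (hv : v ∈ s) (hkv : k v ≠ 0) :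
    (∏ i ∈ s, (k i).factorial) * Nat.multinomial s (Function.update k v (k v - 1))
      = k v * ((∑ i ∈ s, k i) - 1).factorial := by
  classical
  set k' := Function.update k v (k v - 1) with hk'
  have hsum : ∑ i ∈ s, k' i = (∑ i ∈ s, k i) - 1 := by
    rw [hk', Finset.sum_update_of_mem hv]
    have h2 : ∑ i ∈ s, k i = k v + ∑ x ∈ s \ {v}, k x := by
      rw [← Finset.sum_update_of_mem hv]
      exact Finset.sum_congr rfl fun i _ => by
        by_cases h : i = v <;> simp [h]
    omega
  have hprod : ∏ i ∈ s, (k i).factorial = k v * ∏ i ∈ s, (k' i).factorial := by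
    have h1 : ∏ i ∈ s, (k' i).factorial
        = (k v - 1).factorial * ∏ x ∈ s \ {v}, (k x).factorial := by
      rw [show (fun i => (k' i).factorial) = Function.update (fun x => (k x).factorial) v
            ((k v - 1).factorial) from ?_]
      · exact Finset.prod_update_of_mem hv _ _
      · funext i; by_cases h : i = v <;> simp [hk', h, Function.update]
    have h2 : ∏ i ∈ s, (k i).factorial
        = (k v).factorial * ∏ x ∈ s \ {v}, (k x).factorial := by
      rw [← Finset.prod_update_of_mem hv (fun x => (k x).factorial) ((k v).factorial)]
      exact Finset.prod_congr rfl fun i _ => by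
        by_cases h : i = v <;> simp [h]
    rw [h1, h2, ← mul_assoc]
    congr 1
    rw [← Nat.succ_pred_eq_of_pos (Nat.pos_of_ne_zero hkv)]
    simp [Nat.factorial_succ]
  rw [hprod, mul_assoc, Nat.multinomial_spec, hsum]

lemma PS_multinomial_sum (s : Finset ℕ) (k : ℕ → ℕ) (hK : 0 < ∑ i ∈ s, k i) :
    ∑ v ∈ s, (if k v = 0 then 0 else Nat.multinomial s (Function.update k v (k v - 1)))
      = Nat.multinomial s k := by
  classical
  have hpos : 0 < ∏ i ∈ s, (k i).factorial :=
    Finset.prod_pos fun i _ => Nat.factorial_pos _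
  apply Nat.eq_of_mul_eq_mul_left hpos
  rw [Finset.mul_sum, Nat.multinomial_spec]
  have : ∀ v ∈ s, (∏ i ∈ s, (k i).factorial) *
      (if k v = 0 then 0 else Nat.multinomial s (Function.update k v (k v - 1)))
      = k v * ((∑ i ∈ s, k i) - 1).factorial := by
    intro v hv
    by_cases h : k v = 0
    · simp [h]
    · rw [if_neg h, PS_update_factorial s k hv h]
  rw [Finset.sum_congr rfl this, ← Finset.sum_mul,
    ← Nat.succ_pred_eq_of_pos hK, Nat.factorial_succ]
  simp [Nat.succ_pred_eq_of_pos hK]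

lemma PS_card_range_fin (n : ℕ) (P : ℕ → Prop) [DecidablePred P] :
    ((Finset.range n).filter P).card = (Finset.univ.filter (fun j : Fin n => P j)).card := by
  rw [Finset.card_filter, Finset.card_filter, ← Fin.sum_univ_eq_sum_range (fun j => if P j then 1 else 0) n]


-- independence helpers
section S1
variable {Ω : Type*} [MeasurableSpace Ω] {μ : Measure Ω} [IsProbabilityMeasure μ]

lemma PS_indep_N_tup (N : Ω → ℕ) (U : ℕ → Ω → ℕ)
    (hN : Measurable N) (hU : ∀ j, Measurable (U j))
    (hindep : iIndepFun
      (fun o : Option ℕ => Option.elim o N U) μ) (n : ℕ) :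
    IndepFun N (fun ω (j : Fin n) => U j ω) μ := by
  classical
  have hmeas : ∀ o : Option ℕ, Measurable (fun ω => Option.elim o N U ω) := by
    rintro (_ | j); exact hN; exact hU j
  have hdisj : Disjoint ({none} : Finset (Option ℕ))
      ((Finset.range n).map ⟨some, Option.some_injective ℕ⟩) := by
    simp [Finset.disjoint_left]
  have h := (hindep.indepFun_finset {none}
    ((Finset.range n).map ⟨some, Option.some_injective ℕ⟩) hdisj hmeas)
  have h2 := h.comp (_mγ := inferInstance) (_mγ' := inferInstance) (φ := fun x : (∀ _ : ({none} : Finset (Option ℕ)), ℕ) =>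
      x ⟨none, Finset.mem_singleton_self none⟩)
    (ψ := fun (x : ∀ _ : ((Finset.range n).map ⟨some, Option.some_injective ℕ⟩ : Finset (Option ℕ)), ℕ)
        (j : Fin n) => x ⟨some j, by simp⟩)
    (measurable_pi_apply _)
    (measurable_pi_lambda _ fun j => measurable_pi_apply _)
  exact h2

lemma PS_indep_Un_tup (U : ℕ → Ω → ℕ)
    (hU : ∀ j, Measurable (U j))
    (hUindep : iIndepFun U μ) (n : ℕ) :
    IndepFun (U n) (fun ω (j : Fin n) => U j ω) μ := by
  classical
  have hdisj : Disjoint ({n} : Finset ℕ) (Finset.range n) := by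
    simp [Finset.disjoint_left]
  have h := (hUindep.indepFun_finset {n} (Finset.range n) hdisj hU)
  have h2 := h.comp (_mγ := inferInstance) (_mγ' := inferInstance) (φ := fun x : (∀ _ : ({n} : Finset ℕ), ℕ) =>
      x ⟨n, Finset.mem_singleton_self n⟩)
    (ψ := fun (x : ∀ _ : ((Finset.range n) : Finset ℕ), ℕ)
        (j : Fin n) => x ⟨j, Finset.mem_range.mpr j.2⟩)
    (measurable_pi_apply _)
    (measurable_pi_lambda _ fun j => measurable_pi_apply _)
  exact h2

lemma PS_iIndepFun_U (N : Ω → ℕ) (U : ℕ → Ω → ℕ)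
    (hindep : iIndepFun
      (fun o : Option ℕ => Option.elim o N U) μ) :
    iIndepFun U μ := by
  classical
  rw [iIndepFun_iff_measure_inter_preimage_eq_mul] at hindep ⊢
  intro S sets hsets
  have h := hindep (S.map ⟨some, Option.some_injective ℕ⟩)
    (sets := fun o => Option.elim o Set.univ sets) ?_
  · convert h using 1
    · congr 1
      ext ω
      simp [Finset.mem_map]
    · rw [Finset.prod_map]
      rfl
  · intro o ho
    simp only [Finset.mem_map, Function.Embedding.coeFn_mk] at ho
    obtain ⟨j, hj, rfl⟩ := ho
    exact hsets j hj

end S1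

/-- The event that the counts of categories in `s` among the first `m` samples equal `k`. -/
def PSA {Ω : Type*} (U : ℕ → Ω → ℕ) (s : Finset ℕ) (m : ℕ) (k : ℕ → ℕ) : Set Ω :=
  {ω | ∀ i ∈ s, ((Finset.range m).filter (fun j => U j ω = i)).card = k i}

section S2
variable {Ω : Type*} [MeasurableSpace Ω]

lemma PSA_eq_preimage (U : ℕ → Ω → ℕ) (s : Finset ℕ) (m : ℕ) (k : ℕ → ℕ) :
    PSA U s m k = (fun ω (j : Fin m) => U j ω) ⁻¹'
      {x : Fin m → ℕ | ∀ i ∈ s, (Finset.univ.filter (fun j => x j = i)).card = k i} := by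
  classical
  ext ω
  simp only [PSA, Set.mem_setOf_eq, Set.mem_preimage]
  constructor <;> intro h i hi <;> have := h i hi <;>
    rwa [PS_card_range_fin m (fun j => U j ω = i)] at *

lemma PSA_measurableSet (U : ℕ → Ω → ℕ) (hU : ∀ j, Measurable (U j))
    (s : Finset ℕ) (m : ℕ) (k : ℕ → ℕ) : MeasurableSet (PSA U s m k) := by
  rw [PSA_eq_preimage]
  exact (Set.to_countable _).measurableSet.preimage (measurable_pi_lambda _ fun j => hU j)

lemma PS_count_law (μ : Measure Ω) [IsProbabilityMeasure μ]
    (U : ℕ → Ω → ℕ) (hU : ∀ j, Measurable (U j)) (p : PMF ℕ)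
    (hUlaw : ∀ j, μ.map (U j) = p.toMeasure)
    (hUindep : iIndepFun U μ)
    (s : Finset ℕ) :
    ∀ (n : ℕ) (k : ℕ → ℕ),
    μ (PSA U s n k)
      = if (∑ i ∈ s, k i) ≤ n then
          ((n.choose (∑ i ∈ s, k i) * Nat.multinomial s k : ℕ) : ℝ≥0∞)
            * (∏ i ∈ s, (p i) ^ (k i)) * (1 - ∑ i ∈ s, p i) ^ (n - ∑ i ∈ s, k i)
        else 0 := by
  classical
  have hUv : ∀ j v, μ (U j ⁻¹' {v}) = p v := by
    intro j v
    rw [← Measure.map_apply (hU j) (measurableSet_singleton v), hUlaw j,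
      PMF.toMeasure_apply_singleton _ _ (measurableSet_singleton v)]
  intro n
  induction n with
  | zero =>
    intro k
    have hsum0 : ((∑ i ∈ s, k i) ≤ 0) ↔ ∀ i ∈ s, k i = 0 := by
      simp [Nat.le_zero, Finset.sum_eq_zero_iff]
    by_cases hc : ∀ i ∈ s, k i = 0
    · rw [if_pos (hsum0.mpr hc)]
      have h1 : PSA U s 0 k = Set.univ := by
        ext ω
        simp only [PSA, Set.mem_setOf_eq, Set.mem_univ, iff_true]
        intro i hi
        simp [hc i hi]
      have hM : Nat.multinomial s k = 1 := by
        have h := Nat.multinomial_spec s k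
        rw [Finset.sum_eq_zero hc, Finset.prod_eq_one fun i hi => by simp [hc i hi], one_mul] at h
        simpa using h
      have hP : ∏ i ∈ s, (p i) ^ (k i) = 1 := Finset.prod_eq_one fun i hi => by simp [hc i hi]
      rw [h1, hM, hP, Finset.sum_eq_zero hc]
      simp
    · rw [if_neg (fun h => hc (hsum0.mp h))]
      have h1 : PSA U s 0 k = ∅ := by
        ext ω
        simp only [PSA, Set.mem_setOf_eq, Set.mem_empty_iff_false, iff_false]
        push_neg at hc ⊢
        obtain ⟨i, hi, hki⟩ := hc
        exact ⟨i, hi, by simpa using (Ne.symm hki)⟩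
      rw [h1, measure_empty]
  | succ n ih =>
    intro k
    -- counting recursion (pointwise)
    have hcnt : ∀ (ω : Ω) (i : ℕ), ((Finset.range (n+1)).filter (fun j => U j ω = i)).card
        = ((Finset.range n).filter (fun j => U j ω = i)).card + (if U n ω = i then 1 else 0) := by
      intro ω i
      rw [Finset.range_add_one, Finset.filter_insert]
      split_ifs with h
      · exact Finset.card_insert_of_notMem fun hmem =>
          Finset.notMem_range_self (Finset.mem_of_mem_filter _ hmem)
      · rw [add_zero]
    -- independence consequence
    have hkey2 : ∀ (k'' : ℕ → ℕ) (v : ℕ),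
        μ (PSA U s n k'' ∩ U n ⁻¹' {v}) = p v * μ (PSA U s n k'') := by
      intro k'' v
      have hind := PS_indep_Un_tup U hU hUindep n
      rw [Set.inter_comm, PSA_eq_preimage]
      rw [(indepFun_iff_measure_inter_preimage_eq_mul.mp hind) {v} _
        (measurableSet_singleton v) (Set.to_countable _).measurableSet]
      rw [hUv n v, ← PSA_eq_preimage]
    -- split according to the value of U n
    have hsplit : PSA U s (n+1) k = ⋃ v, (PSA U s (n+1) k ∩ U n ⁻¹' {v}) := by
      ext ω
      simp only [Set.mem_iUnion, Set.mem_inter_iff, Set.mem_preimage, Set.mem_singleton_iff]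
      exact ⟨fun h => ⟨U n ω, h, rfl⟩, fun ⟨v, h, _⟩ => h⟩
    have hdisj : Pairwise (Function.onFun Disjoint
        fun v => PSA U s (n+1) k ∩ U n ⁻¹' {v}) := by
      intro a b hab
      refine Set.disjoint_left.mpr fun ω h1 h2 => hab ?_
      rw [← h1.2, ← h2.2]
    have hμsplit : μ (PSA U s (n+1) k) = ∑' v, μ (PSA U s (n+1) k ∩ U n ⁻¹' {v}) := by
      conv_lhs => rw [hsplit]
      exact measure_iUnion hdisj fun v =>
        (PSA_measurableSet U hU s (n+1) k).inter ((hU n) (measurableSet_singleton v))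
    -- identify each piece
    have hv : ∀ v, μ (PSA U s (n+1) k ∩ U n ⁻¹' {v})
        = if v ∈ s then (if k v = 0 then 0
            else p v * μ (PSA U s n (Function.update k v (k v - 1))))
          else p v * μ (PSA U s n k) := by
      intro v
      by_cases hvs : v ∈ s
      · rw [if_pos hvs]
        by_cases hkv : k v = 0
        · rw [if_pos hkv]
          have : PSA U s (n+1) k ∩ U n ⁻¹' {v} = ∅ := by
            ext ω
            simp only [Set.mem_inter_iff, Set.mem_preimage, Set.mem_singleton_iff,
              Set.mem_empty_iff_false, iff_false, not_and]
            intro h1 h2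
            have := h1 v hvs
            rw [hcnt ω v, h2, if_pos rfl, hkv] at this
            omega
          rw [this, measure_empty]
        · rw [if_neg hkv]
          have hset : PSA U s (n+1) k ∩ U n ⁻¹' {v}
              = PSA U s n (Function.update k v (k v - 1)) ∩ U n ⁻¹' {v} := by
            ext ω
            simp only [Set.mem_inter_iff, Set.mem_preimage, Set.mem_singleton_iff, PSA,
              Set.mem_setOf_eq]
            constructor
            · rintro ⟨h1, h2⟩
              refine ⟨fun i hi => ?_, h2⟩
              have hc1 := h1 i hi
              rw [hcnt ω i, h2] at hc1
              by_cases hiv : i = v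
              · subst hiv
                rw [if_pos rfl] at hc1
                rw [Function.update_self]
                omega
              · rw [if_neg (Ne.symm hiv), add_zero] at hc1
                rw [Function.update_of_ne hiv]
                exact hc1
            · rintro ⟨h1, h2⟩
              refine ⟨fun i hi => ?_, h2⟩
              have hc1 := h1 i hi
              rw [hcnt ω i, h2]
              by_cases hiv : i = v
              · subst hiv
                rw [Function.update_self] at hc1
                rw [if_pos rfl, hc1]
                omega
              · rw [Function.update_of_ne hiv] at hc1
                rw [if_neg (Ne.symm hiv), add_zero]
                exact hc1
          rw [hset, hkey2]
      · rw [if_neg hvs]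
        have hset : PSA U s (n+1) k ∩ U n ⁻¹' {v} = PSA U s n k ∩ U n ⁻¹' {v} := by
          ext ω
          simp only [Set.mem_inter_iff, Set.mem_preimage, Set.mem_singleton_iff, PSA,
            Set.mem_setOf_eq]
          constructor
          · rintro ⟨h1, h2⟩
            refine ⟨fun i hi => ?_, h2⟩
            have hc1 := h1 i hi
            have hne : U n ω ≠ i := by rw [h2]; exact fun h => hvs (by rwa [h])
            rw [hcnt ω i, if_neg hne, add_zero] at hc1
            exact hc1
          · rintro ⟨h1, h2⟩
            refine ⟨fun i hi => ?_, h2⟩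
            have hc1 := h1 i hi
            have hne : U n ω ≠ i := by rw [h2]; exact fun h => hvs (by rwa [h])
            rw [hcnt ω i, if_neg hne, add_zero]
            exact hc1
        rw [hset, hkey2]
    -- sum up
    have hfin : (∑ v ∈ s, p v) ≠ ⊤ :=
      (ENNReal.sum_lt_top.mpr fun v _ => (p.apply_lt_top v)).ne
    have hq : (∑' v, if v ∈ s then 0 else p v) = 1 - ∑ v ∈ s, p v := by
      refine ENNReal.eq_sub_of_add_eq hfin ?_
      have h5 : (∑' v, (if v ∈ s then p v else 0)) = ∑ v ∈ s, p v := by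
        rw [tsum_eq_sum (s := s) (fun v hv => by simp [hv])]
        exact Finset.sum_congr rfl fun v hv => by simp [hv]
      rw [← h5, ← ENNReal.tsum_add, ← PMF.tsum_coe p]
      exact tsum_congr fun v => by by_cases h : v ∈ s <;> simp [h]
    have hμ2 : μ (PSA U s (n+1) k)
        = (∑ v ∈ s, (if k v = 0 then 0
            else p v * μ (PSA U s n (Function.update k v (k v - 1)))))
          + (1 - ∑ v ∈ s, p v) * μ (PSA U s n k) := by
      rw [hμsplit]
      have : ∀ v, μ (PSA U s (n+1) k ∩ U n ⁻¹' {v})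
          = (if v ∈ s then (if k v = 0 then 0
              else p v * μ (PSA U s n (Function.update k v (k v - 1)))) else 0)
            + (if v ∈ s then 0 else p v) * μ (PSA U s n k) := by
        intro v
        rw [hv v]
        by_cases h : v ∈ s <;> simp [h]
      rw [tsum_congr this, ENNReal.tsum_add, ENNReal.tsum_mul_right, hq]
      congr 1
      rw [tsum_eq_sum (s := s) fun v hv => by simp [hv]]
      exact Finset.sum_congr rfl fun v hv => by simp [hv]
    rw [hμ2]
    set K := ∑ i ∈ s, k i with hKdef
    set q : ℝ≥0∞ := 1 - ∑ v ∈ s, p v with hqdef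
    set Pp := ∏ i ∈ s, (p i) ^ (k i) with hPpdef
    have hsumupd : ∀ v ∈ s, k v ≠ 0 →
        ∑ i ∈ s, (Function.update k v (k v - 1)) i = K - 1 := by
      intro v hv hkv
      rw [Finset.sum_update_of_mem hv]
      have h2 : K = ∑ x ∈ s \ {v}, k x + k v := by
        rw [hKdef, Finset.sum_eq_sum_sdiff_singleton_add hv]
      omega
    by_cases hK0 : K = 0
    · have hc : ∀ i ∈ s, k i = 0 := by
        have h := hK0
        rw [hKdef] at h
        exact (Finset.sum_eq_zero_iff).mp h
      have hM : Nat.multinomial s k = 1 := by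
        have h := Nat.multinomial_spec s k
        rw [← hKdef, hK0, Finset.prod_eq_one fun i hi => by simp [hc i hi], one_mul] at h
        simpa using h
      have hPp1 : Pp = 1 := Finset.prod_eq_one fun i hi => by simp [hc i hi]
      have hzero : (∑ v ∈ s, (if k v = 0 then 0
          else p v * μ (PSA U s n (Function.update k v (k v - 1))))) = 0 :=
        Finset.sum_eq_zero fun v hv => by rw [if_pos (hc v hv)]
      rw [hzero, ih k, ← hKdef, hK0, if_pos (Nat.zero_le n), if_pos (Nat.zero_le (n+1)),
        hM, ← hPpdef, hPp1]
      simp only [Nat.choose_zero_right, Nat.mul_one, mul_one, Nat.cast_one, one_mul,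
        Nat.sub_zero, zero_add]
      rw [← pow_succ']
    · have hKpos : 0 < K := Nat.pos_of_ne_zero hK0
      by_cases hKn1 : K ≤ n + 1
      · rw [if_pos hKn1]
        have hterm : ∀ v ∈ s, (if k v = 0 then 0
            else p v * μ (PSA U s n (Function.update k v (k v - 1))))
            = (if k v = 0 then 0
                else (Nat.multinomial s (Function.update k v (k v - 1)) : ℝ≥0∞))
              * ((n.choose (K - 1) : ℝ≥0∞) * Pp * q ^ (n + 1 - K)) := by
          intro v hv
          by_cases hkv : k v = 0
          · simp [hkv]
          · rw [if_neg hkv, if_neg hkv, ih, hsumupd v hv hkv, if_pos (by omega)]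
            have hexp : n - (K - 1) = n + 1 - K := by omega
            have hPp : p v * ∏ i ∈ s, (p i) ^ (Function.update k v (k v - 1) i) = Pp := by
              calc p v * ∏ i ∈ s, (p i) ^ (Function.update k v (k v - 1) i)
                  = p v * ((p v) ^ (k v - 1) * ∏ i ∈ s.erase v, (p i) ^ (k i)) := by
                    congr 1
                    rw [← Finset.mul_prod_erase s _ hv, Function.update_self]
                    congr 1
                    exact Finset.prod_congr rfl fun i hi => by
                      rw [Function.update_of_ne (Finset.ne_of_mem_erase hi)]
                _ = (p v) ^ (k v) * ∏ i ∈ s.erase v, (p i) ^ (k i) := by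
                    rw [← mul_assoc, ← pow_succ']
                    congr 2
                    omega
                _ = Pp := by
                    rw [hPpdef]
                    exact Finset.mul_prod_erase s (fun i => (p i) ^ (k i)) hv
            rw [hexp, ← hPp]
            push_cast
            ring
        rw [Finset.sum_congr rfl hterm, ← Finset.sum_mul]
        have hsum2 : (∑ v ∈ s, if k v = 0 then 0
            else (Nat.multinomial s (Function.update k v (k v - 1)) : ℝ≥0∞))
            = (Nat.multinomial s k : ℝ≥0∞) := by
          rw [← PS_multinomial_sum s k hKpos, Nat.cast_sum]
          exact Finset.sum_congr rfl fun v hv => by split_ifs <;> simp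
        rw [hsum2]
        by_cases hKn : K ≤ n
        · rw [ih k, ← hKdef, if_pos hKn, ← hPpdef]
          have hpascal : (n+1).choose K = n.choose (K-1) + n.choose K := by
            have h := Nat.choose_succ_succ' n (K-1)
            rwa [show K - 1 + 1 = K from by omega] at h
          have hqq : q ^ (n + 1 - K) = q ^ (n - K) * q := by
            rw [← pow_succ]
            congr 1
            omega
          rw [hpascal, hqq]
          push_cast
          ring
        · have hKeq : K = n + 1 := by omega
          rw [ih k, ← hKdef, if_neg (by omega), mul_zero, add_zero]
          have h1 : n.choose (K-1) = 1 := by rw [hKeq]; simp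
          have h2 : (n+1).choose K = 1 := by rw [hKeq]; simp
          rw [h1, h2]
          push_cast
          ring
      · rw [if_neg hKn1]
        have h1 : ∀ v ∈ s, (if k v = 0 then 0
            else p v * μ (PSA U s n (Function.update k v (k v - 1)))) = 0 := by
          intro v hv
          by_cases hkv : k v = 0
          · simp [hkv]
          · rw [if_neg hkv, ih, hsumupd v hv hkv, if_neg (by omega), mul_zero]
        rw [Finset.sum_eq_zero h1, ih k, ← hKdef, if_neg (by omega), mul_zero, add_zero]

end S2

lemma PS_real_identity (lam : ℝ≥0) (s : Finset ℕ) (k : ℕ → ℕ) (pn : ℕ → ℝ≥0) (qn : ℝ≥0)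
    (hsum : (∑ i ∈ s, (pn i : ℝ)) + (qn : ℝ) = 1) (m : ℕ) :
    poissonPMFReal lam ((∑ i ∈ s, k i) + m)
        * (((((∑ i ∈ s, k i) + m).choose (∑ i ∈ s, k i)) * Nat.multinomial s k : ℕ) : ℝ)
        * (∏ i ∈ s, (pn i : ℝ) ^ (k i)) * (qn : ℝ) ^ m
      = (∏ i ∈ s, poissonPMFReal (pn i * lam) (k i)) * poissonPMFReal (qn * lam) m := by
  set K := ∑ i ∈ s, k i with hK
  have hfact : ((((K + m).choose K) * Nat.multinomial s k : ℕ) : ℝ)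
      * ((∏ i ∈ s, ((k i).factorial : ℝ)) * (m.factorial : ℝ)) = (((K + m).factorial : ℝ)) := by
    push_cast
    rw [show ∀ a b c d : ℝ, a * b * (c * d) = a * (b * c) * d from fun a b c d => by ring]
    rw [mul_comm (Nat.multinomial s k : ℝ) (∏ i ∈ s, ((k i).factorial : ℝ))]
    have h1 : (∏ i ∈ s, ((k i).factorial : ℝ)) * (Nat.multinomial s k : ℝ)
        = ((K).factorial : ℝ) := by
      rw [← Nat.cast_prod, ← Nat.cast_mul, Nat.multinomial_spec]
    rw [h1]
    have := Nat.choose_mul_factorial_mul_factorial (Nat.le_add_right K m)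
    rw [Nat.add_sub_cancel_left] at this
    exact_mod_cast this
  have hexp : Real.exp (-(lam:ℝ))
      = (∏ i ∈ s, Real.exp (-((pn i : ℝ) * lam))) * Real.exp (-((qn:ℝ) * lam)) := by
    rw [← Real.exp_sum, ← Real.exp_add]
    congr 1
    have h2 : ∑ i ∈ s, -((pn i : ℝ) * lam) = -((∑ i ∈ s, (pn i : ℝ)) * lam) := by
      rw [Finset.sum_mul, ← Finset.sum_neg_distrib]
    rw [h2]
    linear_combination (lam:ℝ) * hsum
  unfold poissonPMFReal
  push_cast
  rw [Finset.prod_div_distrib, Finset.prod_mul_distrib]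
  have h3 : ∏ i ∈ s, ((pn i : ℝ) * lam) ^ (k i)
      = (∏ i ∈ s, (pn i : ℝ) ^ (k i)) * (lam : ℝ) ^ K := by
    rw [← Finset.prod_pow_eq_pow_sum, ← Finset.prod_mul_distrib]
    exact Finset.prod_congr rfl fun i _ => (mul_pow _ _ _)
  rw [h3, hexp]
  have h4 : ((lam : ℝ)) ^ (K + m) = (lam:ℝ)^K * (lam:ℝ)^m := pow_add _ _ _
  have hne1 : (((K+m).factorial : ℝ)) ≠ 0 := Nat.cast_ne_zero.mpr (Nat.factorial_ne_zero _)
  have hne2 : (∏ i ∈ s, ((k i).factorial : ℝ)) ≠ 0 :=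
    Finset.prod_ne_zero_iff.mpr fun i _ => Nat.cast_ne_zero.mpr (Nat.factorial_ne_zero _)
  have hne3 : ((m.factorial : ℝ)) ≠ 0 := Nat.cast_ne_zero.mpr (Nat.factorial_ne_zero _)
  field_simp
  have hcomm : ∏ x ∈ s, Real.exp (-((lam:ℝ) * (pn x : ℝ)))
      = ∏ x ∈ s, Real.exp (-((pn x : ℝ) * (lam:ℝ))) :=
    Finset.prod_congr rfl fun x _ => by rw [mul_comm]
  rw [hcomm]
  push_cast at hfact
  linear_combination ((∏ i ∈ s, Real.exp (-((pn i : ℝ) * (lam:ℝ))))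
    * (∏ i ∈ s, ((pn i : ℝ)) ^ k i)
    * ((qn:ℝ)) ^ m * ((lam:ℝ)) ^ K * ((lam:ℝ)) ^ m) * hfact

lemma PS_splitting_key {Ω : Type*} [MeasurableSpace Ω] (μ : Measure Ω) [IsProbabilityMeasure μ]
    (lam : ℝ≥0)
    (N : Ω → ℕ) (U : ℕ → Ω → ℕ)
    (hN : Measurable N) (hU : ∀ j, Measurable (U j))
    (p : PMF ℕ)
    (hNlaw : μ.map N = (poissonPMF lam).toMeasure)
    (hUlaw : ∀ j, μ.map (U j) = p.toMeasure)
    (hindep : iIndepFun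
      (fun o : Option ℕ => Option.elim o N U) μ)
    (Y : ℕ → Ω → ℕ)
    (hY : ∀ i ω, Y i ω = ((Finset.range (N ω)).filter (fun j => U j ω = i)).card)
    (s : Finset ℕ) (k : ℕ → ℕ) :
    μ (⋂ i ∈ s, Y i ⁻¹' {k i}) = ∏ i ∈ s, poissonPMF ((p i).toNNReal * lam) (k i) := by
  classical
  have hps : ∀ i, (p i) ≠ ⊤ := fun i => PMF.apply_ne_top p i
  have hNn : ∀ n, μ (N ⁻¹' {n}) = poissonPMF lam n := by
    intro n
    rw [← Measure.map_apply hN (measurableSet_singleton n), hNlaw,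
      PMF.toMeasure_apply_singleton _ _ (measurableSet_singleton n)]
  have hUindep := PS_iIndepFun_U N U hindep
  have hg := PS_count_law μ U hU p hUlaw hUindep s
  -- decompose according to the value of N
  have hsplit : (⋂ i ∈ s, Y i ⁻¹' {k i}) = ⋃ n, (N ⁻¹' {n} ∩ PSA U s n k) := by
    ext ω
    simp only [Set.mem_iInter, Set.mem_iUnion, Set.mem_inter_iff, Set.mem_preimage,
      Set.mem_singleton_iff, PSA, Set.mem_setOf_eq]
    constructor
    · intro h
      exact ⟨N ω, rfl, fun i hi => by rw [← hY i ω]; exact h i hi⟩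
    · rintro ⟨n, hn, h⟩ i hi
      rw [hY i ω, hn]
      exact h i hi
  have hdisj : Pairwise (Function.onFun Disjoint fun n => N ⁻¹' {n} ∩ PSA U s n k) := by
    intro a b hab
    refine Set.disjoint_left.mpr fun ω h1 h2 => hab ?_
    rw [← h1.1, ← h2.1]
  have h1 : μ (⋂ i ∈ s, Y i ⁻¹' {k i}) = ∑' n, μ (N ⁻¹' {n} ∩ PSA U s n k) := by
    rw [hsplit]
    exact measure_iUnion hdisj fun n =>
      (hN (measurableSet_singleton n)).inter (PSA_measurableSet U hU s n k)
  have h2 : ∀ n, μ (N ⁻¹' {n} ∩ PSA U s n k) = poissonPMF lam n * μ (PSA U s n k) := by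
    intro n
    have hNT := PS_indep_N_tup N U hN hU hindep n
    rw [PSA_eq_preimage]
    rw [(indepFun_iff_measure_inter_preimage_eq_mul.mp hNT) {n} _
      (measurableSet_singleton n) (Set.to_countable _).measurableSet]
    rw [hNn n, ← PSA_eq_preimage]
  rw [h1, tsum_congr (fun n => by rw [h2 n, hg n k])]
  -- shift the sum
  have hshift : (∑' (n : ℕ), poissonPMF lam n *
      (if (∑ i ∈ s, k i) ≤ n then
          ((n.choose (∑ i ∈ s, k i) * Nat.multinomial s k : ℕ) : ℝ≥0∞)
            * (∏ i ∈ s, (p i) ^ (k i)) * (1 - ∑ i ∈ s, p i) ^ (n - ∑ i ∈ s, k i)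
        else 0))
      = ∑' (m : ℕ), poissonPMF lam ((∑ i ∈ s, k i) + m) *
          (((((∑ i ∈ s, k i) + m).choose (∑ i ∈ s, k i) * Nat.multinomial s k : ℕ) : ℝ≥0∞)
            * (∏ i ∈ s, (p i) ^ (k i)) * (1 - ∑ i ∈ s, p i) ^ m) := by
    rw [← Function.Injective.tsum_eq (g := fun m => (∑ i ∈ s, k i) + m)
      (fun a b h => by dsimp at h; omega) ?_]
    · apply tsum_congr
      intro m
      rw [if_pos (Nat.le_add_right _ _), Nat.add_sub_cancel_left]
    · intro n hn
      simp only [Function.mem_support] at hn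
      by_contra hc
      simp only [Set.mem_range, not_exists] at hc
      have hlt : ¬ ((∑ i ∈ s, k i) ≤ n) := fun h => hc (n - ∑ i ∈ s, k i) (by omega)
      rw [if_neg hlt, mul_zero] at hn
      exact hn rfl
  rw [hshift]
  -- real quantities
  set qn : ℝ≥0 := 1 - ∑ i ∈ s, (p i).toNNReal with hqn
  have hcoe : (∑ i ∈ s, p i) = ((∑ i ∈ s, (p i).toNNReal : ℝ≥0) : ℝ≥0∞) := by
    rw [ENNReal.coe_finset_sum]
    exact Finset.sum_congr rfl fun i _ => (ENNReal.coe_toNNReal (hps i)).symm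
  have hq : (1 - ∑ i ∈ s, p i) = ((qn : ℝ≥0) : ℝ≥0∞) := by
    rw [hcoe, ← ENNReal.coe_one, ← ENNReal.coe_sub, hqn]
  have hsum_le : (∑ i ∈ s, (p i).toNNReal) ≤ 1 := by
    rw [← ENNReal.coe_le_one_iff, ← hcoe]
    exact le_trans (ENNReal.sum_le_tsum s) (le_of_eq (PMF.tsum_coe p))
  have hsumreal : (∑ i ∈ s, (((p i).toNNReal : ℝ≥0) : ℝ)) + (qn : ℝ) = 1 := by
    rw [hqn, NNReal.coe_sub hsum_le, NNReal.coe_one, NNReal.coe_sum]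
    ring
  -- per-term identification
  have hterm : ∀ m : ℕ, poissonPMF lam ((∑ i ∈ s, k i) + m) *
          (((((∑ i ∈ s, k i) + m).choose (∑ i ∈ s, k i) * Nat.multinomial s k : ℕ) : ℝ≥0∞)
            * (∏ i ∈ s, (p i) ^ (k i)) * (1 - ∑ i ∈ s, p i) ^ m)
      = ENNReal.ofReal ((∏ i ∈ s, poissonPMFReal ((p i).toNNReal * lam) (k i))
          * poissonPMFReal (qn * lam) m) := by
    intro m
    rw [← PS_real_identity lam s k (fun i => (p i).toNNReal) qn hsumreal m]
    have e2 : ENNReal.ofReal (((((∑ i ∈ s, k i) + m).choose (∑ i ∈ s, k i)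
        * Nat.multinomial s k : ℕ) : ℝ))
        = ((((∑ i ∈ s, k i) + m).choose (∑ i ∈ s, k i) * Nat.multinomial s k : ℕ) : ℝ≥0∞) :=
      ENNReal.ofReal_natCast _
    have e3 : ENNReal.ofReal (∏ i ∈ s, (((p i).toNNReal : ℝ≥0) : ℝ) ^ (k i))
        = ∏ i ∈ s, (p i) ^ (k i) := by
      rw [ENNReal.ofReal_prod_of_nonneg (fun i _ => pow_nonneg (NNReal.coe_nonneg _) _)]
      exact Finset.prod_congr rfl fun i _ => by
        rw [ENNReal.ofReal_pow (NNReal.coe_nonneg _), ENNReal.ofReal_coe_nnreal,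
          ENNReal.coe_toNNReal (hps i)]
    have e4 : ENNReal.ofReal ((qn : ℝ) ^ m) = (1 - ∑ i ∈ s, p i) ^ m := by
      rw [ENNReal.ofReal_pow (NNReal.coe_nonneg _), ENNReal.ofReal_coe_nnreal, ← hq]
    have hnn1 : (0:ℝ) ≤ poissonPMFReal lam ((∑ i ∈ s, k i) + m) := poissonPMFReal_nonneg
    have hnn2 : (0:ℝ) ≤ (((((∑ i ∈ s, k i) + m).choose (∑ i ∈ s, k i)
        * Nat.multinomial s k : ℕ) : ℝ)) := Nat.cast_nonneg _
    have hnn3 : (0:ℝ) ≤ ∏ i ∈ s, (((p i).toNNReal : ℝ≥0) : ℝ) ^ (k i) :=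
      Finset.prod_nonneg fun i _ => pow_nonneg (NNReal.coe_nonneg _) _
    rw [ENNReal.ofReal_mul (by positivity), ENNReal.ofReal_mul (by positivity),
      ENNReal.ofReal_mul hnn1, e2, e3, e4]
    have e1 : ENNReal.ofReal (poissonPMFReal lam ((∑ i ∈ s, k i) + m))
        = poissonPMF lam ((∑ i ∈ s, k i) + m) := rfl
    rw [e1]
    ring
  rw [tsum_congr hterm]
  have hPR : (0:ℝ) ≤ ∏ i ∈ s, poissonPMFReal ((p i).toNNReal * lam) (k i) :=
    Finset.prod_nonneg fun i _ => poissonPMFReal_nonneg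
  calc ∑' (m : ℕ), ENNReal.ofReal ((∏ i ∈ s, poissonPMFReal ((p i).toNNReal * lam) (k i))
          * poissonPMFReal (qn * lam) m)
      = ∑' (m : ℕ), ENNReal.ofReal (∏ i ∈ s, poissonPMFReal ((p i).toNNReal * lam) (k i))
          * poissonPMF (qn * lam) m := by
        exact tsum_congr fun m => by rw [ENNReal.ofReal_mul hPR]; rfl
    _ = ENNReal.ofReal (∏ i ∈ s, poissonPMFReal ((p i).toNNReal * lam) (k i)) := by
        rw [ENNReal.tsum_mul_left, PMF.tsum_coe, mul_one]
    _ = ∏ i ∈ s, poissonPMF ((p i).toNNReal * lam) (k i) := by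
        rw [ENNReal.ofReal_prod_of_nonneg (fun i _ => poissonPMFReal_nonneg)]
        rfl

theorem poisson_splitting
    {Ω : Type*} [MeasurableSpace Ω] (μ : Measure Ω) [IsProbabilityMeasure μ]
    (lam : ℝ≥0) (hlam : 0 < lam)
    (N : Ω → ℕ) (U : ℕ → Ω → ℕ)
    (hN : Measurable N) (hU : ∀ j, Measurable (U j))
    (p : PMF ℕ)
    (hNlaw : μ.map N = (poissonPMF lam).toMeasure)
    (hUlaw : ∀ j, μ.map (U j) = p.toMeasure)
    (hindep : iIndepFun
      (fun o : Option ℕ => Option.elim o N U) μ)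
    (Y : ℕ → Ω → ℕ)
    (hY : ∀ i ω, Y i ω = ((Finset.range (N ω)).filter (fun j => U j ω = i)).card) :
    iIndepFun Y μ ∧
      ∀ i : ℕ, μ.map (Y i) = (poissonPMF ((p i).toNNReal * lam)).toMeasure := by
  classical
  -- measurability of Y
  have hYmeas : ∀ i, Measurable (Y i) := by
    intro i
    apply measurable_to_countable'
    intro c
    have hset : Y i ⁻¹' {c} = ⋃ n, (N ⁻¹' {n} ∩ PSA U {i} n (fun _ => c)) := by
      ext ω
      simp only [Set.mem_preimage, Set.mem_singleton_iff, Set.mem_iUnion, Set.mem_inter_iff,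
        PSA, Set.mem_setOf_eq, Finset.mem_singleton]
      constructor
      · intro h
        refine ⟨N ω, rfl, fun j hj => ?_⟩
        subst hj
        rw [← hY j ω]
        exact h
      · rintro ⟨n, hn, h⟩
        rw [hY i ω, hn]
        exact h i rfl
    rw [hset]
    exact MeasurableSet.iUnion fun n =>
      (hN (measurableSet_singleton n)).inter (PSA_measurableSet U hU {i} n _)
  -- marginal laws on singletons
  have hmarg : ∀ i c, μ (Y i ⁻¹' {c}) = poissonPMF ((p i).toNNReal * lam) c := by
    intro i c
    have h := PS_splitting_key μ lam N U hN hU p hNlaw hUlaw hindep Y hY {i} (fun _ => c)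
    simpa using h
  constructor
  · -- independence
    have hgen : (inferInstance : MeasurableSpace ℕ)
        = MeasurableSpace.generateFrom {S : Set ℕ | ∃ c, S = {c}} := by
      apply le_antisymm
      · intro t _
        have ht : t = ⋃ c ∈ t, ({c} : Set ℕ) := by
          simp
        rw [ht]
        exact MeasurableSet.biUnion t.to_countable fun c _ =>
          MeasurableSpace.measurableSet_generateFrom ⟨c, rfl⟩
      · exact MeasurableSpace.generateFrom_le fun t _ => MeasurableSpace.measurableSet_top
    have hpi : ∀ i : ℕ, IsPiSystem {S | ∃ c, S = Y i ⁻¹' {c}} := by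
      intro i
      rintro S ⟨c, rfl⟩ T ⟨d, rfl⟩ hne
      rcases eq_or_ne c d with rfl | hcd
      · exact ⟨c, by simp⟩
      · exfalso
        obtain ⟨ω, h1, h2⟩ := hne
        simp only [Set.mem_preimage, Set.mem_singleton_iff] at h1 h2
        exact hcd (by rw [← h1, ← h2])
    have hcomap : ∀ i : ℕ, MeasurableSpace.comap (Y i) inferInstance
        = MeasurableSpace.generateFrom {S | ∃ c, S = Y i ⁻¹' {c}} := by
      intro i
      conv_lhs => rw [hgen]
      rw [MeasurableSpace.comap_generateFrom]
      congr 1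
      ext S
      simp only [Set.mem_image, Set.mem_setOf_eq]
      constructor
      · rintro ⟨T, ⟨c, rfl⟩, rfl⟩
        exact ⟨c, rfl⟩
      · rintro ⟨c, rfl⟩
        exact ⟨{c}, ⟨c, rfl⟩, rfl⟩
    refine iIndepSets.iIndep (m := fun i => MeasurableSpace.comap (Y i) inferInstance)
      (fun i => (hYmeas i).comap_le) (fun i => {S | ∃ c, S = Y i ⁻¹' {c}})
      hpi hcomap ?_
    · rw [iIndepSets_iff]
      intro S f hf
      set c : ℕ → ℕ := fun i => if h : ∃ cc, f i = Y i ⁻¹' {cc} then h.choose else 0 with hcdef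
      have hfc : ∀ i ∈ S, f i = Y i ⁻¹' {c i} := by
        intro i hi
        have h := hf i hi
        simp only [Set.mem_setOf_eq] at h
        simp only [hcdef, dif_pos h]
        exact h.choose_spec
      have heq : (⋂ i ∈ S, f i) = ⋂ i ∈ S, Y i ⁻¹' {c i} :=
        Set.iInter_congr fun i => Set.iInter_congr fun hi => hfc i hi
      rw [heq, PS_splitting_key μ lam N U hN hU p hNlaw hUlaw hindep Y hY S c]
      exact Finset.prod_congr rfl fun i hi => by rw [hfc i hi, hmarg i (c i)]
  · intro i
    apply Measure.ext_of_singleton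
    intro c
    rw [Measure.map_apply (hYmeas i) (measurableSet_singleton c),
      PMF.toMeasure_apply_singleton _ _ (measurableSet_singleton c), hmarg i c]
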